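/- Let (X, 𝒜, μ) be a measure space with μ(X) < ∞, let p ∈ [2, ∞) be a real number, let a < b be reals, and let Y : [a, b] → (X → ℂ) be such that Y_a is a bounded measurable function, each Y_t is measurable, and there exist C ∈ [0, ∞) and θ ∈ (1/2, 1] with sup_{x ∈ X} |Y_t(x) − Y_s(x)| ≤ C·|t − s|^θ for all s, t ∈ [a, b]. Then for every ε > 0 there exists δ > 0 such that for every partition a = t_0 < t_1 < ⋯ < t_n = b with max_i (t_{i+1} − t_i) < δ, one has | Σ_{i=0}^{n−1} Re ∫_X Y_{t_{i+1}}(x)·( conj(Y_{t_{i+1}}(x))·|Y_{t_{i+1}}(x)|^{p−2} − conj(Y_{t_i}(x))·|Y_{t_i}(x)|^{p−2} ) dμ(x) − ((p−1)/p)·( ∫_X |Y_b(x)|^p dμ(x) − ∫_X |Y_a(x)|^p dμ(x) ) | < ε. -/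

import Mathlib

open MeasureTheory Complex


-- scalar inequality: u^q ≥ (q+1)u - q for u ∈ [0,1], q ≥ 0
lemma scalar_ineq {q u : ℝ} (hq : 0 ≤ q) (hu0 : 0 ≤ u) (hu1 : u ≤ 1) :
    (q + 1) * u - q ≤ u ^ q := by
  rcases le_or_gt 1 q with hq1 | hq1
  · have := one_add_mul_self_le_rpow_one_add (s := u - 1) (by linarith) hq1
    have h2 : (1 : ℝ) + (u - 1) = u := by ring
    rw [h2] at this
    nlinarith [this]
  · rcases eq_or_lt_of_le hu0 with rfl | hu0'
    · rcases eq_or_lt_of_le hq with rfl | hq'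
      · simp
      · rw [Real.zero_rpow hq'.ne']; nlinarith
    · have h1 : u ^ (1:ℝ) ≤ u ^ q := by
        apply Real.rpow_le_rpow_of_exponent_ge hu0' hu1 (le_of_lt hq1)
      rw [Real.rpow_one] at h1
      nlinarith

lemma rpow_diff_bound {q R s r : ℝ} (hq : 0 ≤ q) (hs : 0 ≤ s) (hsr : s ≤ r) (hrR : r ≤ R) :
    r * (r ^ q - s ^ q) ≤ (q + 1) * R ^ q * (r - s) := by
  rcases eq_or_lt_of_le (hs.trans hsr) with rfl | hr
  · have : s = 0 := le_antisymm hsr hs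
    simp [this]
  · set u := s / r with hu
    have hu0 : 0 ≤ u := div_nonneg hs hr.le
    have hu1 : u ≤ 1 := div_le_one_of_le₀ hsr hr.le
    have key := scalar_ineq hq hu0 hu1
    have hsu : s = u * r := by rw [hu, div_mul_cancel₀ _ hr.ne']
    have hsq : s ^ q = u ^ q * r ^ q := by
      rw [hsu, Real.mul_rpow hu0 hr.le]
    have hrq : (0:ℝ) ≤ r ^ q := Real.rpow_nonneg hr.le q
    have hRq : r ^ q ≤ R ^ q := Real.rpow_le_rpow hr.le hrR hq
    -- r*(r^q - s^q) = r^q * r * (1 - u^q) ≤ (q+1) r^q (r - s) ≤ (q+1) R^q (r-s)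
    have h1 : r * (r ^ q - s ^ q) ≤ (q + 1) * r ^ q * (r - s) := by
      rw [hsq, hsu]
      nlinarith [mul_nonneg (mul_nonneg hrq hr.le) (by linarith : (0:ℝ) ≤ u ^ q - ((q+1)*u - q))]
    have h2 : (q + 1) * r ^ q * (r - s) ≤ (q + 1) * R ^ q * (r - s) := by
      have : (0:ℝ) ≤ r - s := by linarith
      nlinarith [mul_nonneg (mul_nonneg (by linarith : (0:ℝ) ≤ q+1) this) (by linarith : (0:ℝ) ≤ R ^ q - r ^ q)]
    linarith

lemma g_lip_aux {p R : ℝ} (hp : 2 ≤ p) {y w : ℂ}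
    (hy : ‖y‖ ≤ R) (hw : ‖w‖ ≤ R) (hyw : ‖y‖ ≤ ‖w‖) :
    ‖(starRingEnd ℂ) w * ((‖w‖ ^ (p - 2) : ℝ) : ℂ)
      - (starRingEnd ℂ) y * ((‖y‖ ^ (p - 2) : ℝ) : ℂ)‖
      ≤ p * R ^ (p - 2) * ‖w - y‖ := by
  set q := p - 2 with hq
  have hq0 : 0 ≤ q := by linarith
  set r := ‖w‖ with hr
  set s := ‖y‖ with hs
  have hs0 : (0:ℝ) ≤ s := norm_nonneg y
  have hr0 : (0:ℝ) ≤ r := norm_nonneg w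
  have hrpow : s ^ q ≤ r ^ q := Real.rpow_le_rpow hs0 hyw hq0
  have hRq : s ^ q ≤ R ^ q := Real.rpow_le_rpow hs0 hy hq0
  have htri : r - s ≤ ‖w - y‖ := by
    have := norm_sub_le w y  -- maybe not right; use abs_sub_abs
    have h2 : ‖w‖ ≤ ‖w - y‖ + ‖y‖ := by
      calc ‖w‖ = ‖(w - y) + y‖ := by ring_nf
        _ ≤ ‖w - y‖ + ‖y‖ := norm_add_le _ _
    simpa [hr, hs] using by linarith
  have hmain := rpow_diff_bound hq0 hs0 hyw hw
  have hdecomp : (starRingEnd ℂ) w * ((r ^ q : ℝ) : ℂ) - (starRingEnd ℂ) y * ((s ^ q : ℝ) : ℂ)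
      = (starRingEnd ℂ) w * (((r ^ q - s ^ q : ℝ)) : ℂ)
        + ((starRingEnd ℂ) w - (starRingEnd ℂ) y) * ((s ^ q : ℝ) : ℂ) := by
    push_cast
    ring
  rw [hdecomp]
  calc ‖_‖ ≤ ‖(starRingEnd ℂ) w * (((r ^ q - s ^ q : ℝ)) : ℂ)‖
        + ‖((starRingEnd ℂ) w - (starRingEnd ℂ) y) * ((s ^ q : ℝ) : ℂ)‖ :=
        norm_add_le _ _
    _ = r * |r ^ q - s ^ q| + ‖w - y‖ * |s ^ q| := by
        rw [norm_mul, norm_mul, Complex.norm_conj, Complex.norm_real, Complex.norm_real, Real.norm_eq_abs, Real.norm_eq_abs,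
          ← map_sub (starRingEnd ℂ), Complex.norm_conj]
    _ ≤ (q + 1) * R ^ q * ‖w - y‖ + ‖w - y‖ * R ^ q := by
        have h1 : |r ^ q - s ^ q| = r ^ q - s ^ q := abs_of_nonneg (by linarith)
        have h2 : |s ^ q| = s ^ q := abs_of_nonneg (Real.rpow_nonneg hs0 q)
        rw [h1, h2]
        have h3 : r * (r ^ q - s ^ q) ≤ (q + 1) * R ^ q * ‖w - y‖ := by
          refine hmain.trans ?_
          have hRq0 : (0:ℝ) ≤ R ^ q := Real.rpow_nonneg (hs0.trans hy) q
          exact mul_le_mul_of_nonneg_left htri (by positivity)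
        have h4 : ‖w - y‖ * s ^ q ≤ ‖w - y‖ * R ^ q :=
          mul_le_mul_of_nonneg_left hRq (norm_nonneg _)
        linarith
    _ = p * R ^ q * ‖w - y‖ := by
        linear_combination (R ^ q * ‖w - y‖) * hq

lemma abs_rpow_eq_normSq_rpow (z : ℂ) (c : ℝ) :
    ‖z‖ ^ c = Complex.normSq z ^ (c / 2) := by
  rw [Complex.norm_def, Real.sqrt_eq_rpow, ← Real.rpow_mul (Complex.normSq_nonneg z)]
  congr 1; ring

lemma myHasDerivAt_abs_rpow {p : ℝ} (hp : 2 ≤ p) (y v : ℂ) (t : ℝ) :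
    HasDerivAt (fun t : ℝ => ‖y + (t:ℂ) * v‖ ^ p)
      (p * ((v * (starRingEnd ℂ) (y + (t:ℂ) * v)).re
        * ‖y + (t:ℂ) * v‖ ^ (p - 2))) t := by
  have hQ : ∀ s : ℝ, Complex.normSq (y + (s:ℂ) * v)
      = Complex.normSq y + (2 * (y * (starRingEnd ℂ) v).re) * s + Complex.normSq v * s ^ 2 := by
    intro s
    rw [Complex.normSq_add]
    have h1 : Complex.normSq ((s:ℂ) * v) = Complex.normSq v * s ^ 2 := by
      rw [Complex.normSq_mul, Complex.normSq_ofReal]; ring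
    have h2 : (y * (starRingEnd ℂ) ((s:ℂ) * v)).re = (y * (starRingEnd ℂ) v).re * s := by
      rw [map_mul, Complex.conj_ofReal]
      have : y * ((s:ℂ) * (starRingEnd ℂ) v) = (s:ℂ) * (y * (starRingEnd ℂ) v) := by ring
      rw [show y * ((s:ℂ) * (starRingEnd ℂ) v) = (s:ℂ) * (y * (starRingEnd ℂ) v) by ring,
        Complex.re_ofReal_mul]
      ring
    rw [h1, h2]; ring
  have hQd : HasDerivAt (fun s : ℝ => Complex.normSq (y + (s:ℂ) * v))
      (2 * ((y + (t:ℂ) * v) * (starRingEnd ℂ) v).re) t := by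
    have : HasDerivAt (fun s : ℝ => Complex.normSq y + (2 * (y * (starRingEnd ℂ) v).re) * s
        + Complex.normSq v * s ^ 2)
        (2 * (y * (starRingEnd ℂ) v).re + Complex.normSq v * (2 * t)) t := by
      have h1 := ((hasDerivAt_id t).const_mul (2 * (y * (starRingEnd ℂ) v).re)).const_add
        (Complex.normSq y)
      have h2 := (hasDerivAt_pow 2 t).const_mul (Complex.normSq v)
      refine (h1.add h2).congr_deriv ?_
      push_cast; ring
    refine HasDerivAt.congr_deriv (this.congr_of_eventuallyEq ?_) ?_
    · filter_upwards with s using hQ s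
    · have : ((y + (t:ℂ) * v) * (starRingEnd ℂ) v).re
          = (y * (starRingEnd ℂ) v).re + Complex.normSq v * t := by
        rw [add_mul]
        rw [Complex.add_re]
        congr 1
        rw [show (t:ℂ) * v * (starRingEnd ℂ) v = (t:ℂ) * (v * (starRingEnd ℂ) v) by ring]
        rw [Complex.mul_conj]
        rw [Complex.re_ofReal_mul]
        simp [Complex.normSq_ofReal]
        ring
      rw [this]; ring
  have hcomp : HasDerivAt (fun s : ℝ => Complex.normSq (y + (s:ℂ) * v) ^ (p / 2))
      ((2 * ((y + (t:ℂ) * v) * (starRingEnd ℂ) v).re) * (p / 2)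
        * Complex.normSq (y + (t:ℂ) * v) ^ (p / 2 - 1)) t :=
    hQd.rpow_const (Or.inr (by linarith))
  have hfun : (fun s : ℝ => ‖y + (s:ℂ) * v‖ ^ p)
      = fun s : ℝ => Complex.normSq (y + (s:ℂ) * v) ^ (p / 2) := by
    funext s; exact abs_rpow_eq_normSq_rpow _ _
  rw [hfun]
  convert hcomp using 1
  have h3 : ‖y + (t:ℂ) * v‖ ^ (p - 2)
      = Complex.normSq (y + (t:ℂ) * v) ^ (p / 2 - 1) := by
    rw [abs_rpow_eq_normSq_rpow]; ring_nf
  have h4 : (v * (starRingEnd ℂ) (y + (t:ℂ) * v)).re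
      = ((y + (t:ℂ) * v) * (starRingEnd ℂ) v).re := by
    simp [Complex.mul_re, Complex.conj_re, Complex.conj_im]; ring
  rw [h3, h4]; ring

lemma g_lipschitz {p R : ℝ} (hp : 2 ≤ p) {y w : ℂ}
    (hy : ‖y‖ ≤ R) (hw : ‖w‖ ≤ R) :
    ‖(starRingEnd ℂ) w * ((‖w‖ ^ (p - 2) : ℝ) : ℂ)
      - (starRingEnd ℂ) y * ((‖y‖ ^ (p - 2) : ℝ) : ℂ)‖
      ≤ p * R ^ (p - 2) * ‖w - y‖ := by
  rcases le_total (‖y‖) (‖w‖) with h | h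
  · exact g_lip_aux hp hy hw h
  · have := g_lip_aux hp hw hy h
    have e1 : ‖(starRingEnd ℂ) w * ((‖w‖ ^ (p - 2) : ℝ) : ℂ)
        - (starRingEnd ℂ) y * ((‖y‖ ^ (p - 2) : ℝ) : ℂ)‖
        = ‖(starRingEnd ℂ) y * ((‖y‖ ^ (p - 2) : ℝ) : ℂ)
        - (starRingEnd ℂ) w * ((‖w‖ ^ (p - 2) : ℝ) : ℂ)‖ := by
      exact norm_sub_rev _ _
    have e2 : ‖w - y‖ = ‖y - w‖ := norm_sub_rev _ _
    rw [e1, e2]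
    exact this


lemma taylor_bound {p R : ℝ} (hp : 2 ≤ p) (hR : 0 ≤ R) {y z : ℂ}
    (hy : ‖y‖ ≤ R) (hz : ‖z‖ ≤ R) :
    |‖z‖ ^ p - ‖y‖ ^ p
      - p * ((z - y) * ((starRingEnd ℂ) y * ((‖y‖ ^ (p - 2) : ℝ) : ℂ))).re|
      ≤ p * (p * R ^ (p - 2)) * ‖z - y‖ ^ 2 := by
  set v := z - y with hv
  set F0 : ℝ := p * ((v * ((starRingEnd ℂ) y * ((‖y‖ ^ (p - 2) : ℝ) : ℂ))).re) with hF0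
  set G : ℝ → ℝ := fun t => ‖y + (t:ℂ) * v‖ ^ p - t * F0 with hG
  have habsw : ∀ t ∈ Set.Icc (0:ℝ) 1, ‖y + (t:ℂ) * v‖ ≤ R := by
    rintro t ⟨ht0, ht1⟩
    have : y + (t:ℂ) * v = (1 - (t:ℂ)) * y + (t:ℂ) * z := by rw [hv]; ring
    rw [this]
    calc ‖(1 - (t:ℂ)) * y + (t:ℂ) * z‖
        ≤ ‖(1 - (t:ℂ)) * y‖ + ‖(t:ℂ) * z‖ := norm_add_le _ _
      _ = |1 - t| * ‖y‖ + |t| * ‖z‖ := by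
          have hcast : (1 - (t:ℂ)) = ((1 - t : ℝ) : ℂ) := by push_cast; ring
          rw [hcast, norm_mul, norm_mul, Complex.norm_real, Complex.norm_real, Real.norm_eq_abs, Real.norm_eq_abs]
      _ ≤ (1 - t) * R + t * R := by
          rw [_root_.abs_of_nonneg (by linarith : (0:ℝ) ≤ 1 - t), _root_.abs_of_nonneg ht0]
          have h1 : (0:ℝ) ≤ 1 - t := by linarith
          nlinarith [norm_nonneg y, norm_nonneg z]
      _ = R := by ring
  have hGderiv : ∀ t : ℝ, HasDerivAt G
      (p * ((v * (starRingEnd ℂ) (y + (t:ℂ) * v)).re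
        * ‖y + (t:ℂ) * v‖ ^ (p - 2)) - F0) t := by
    intro t
    exact (myHasDerivAt_abs_rpow hp y v t).sub (hasDerivAt_mul_const F0)
  have hbound : ∀ t ∈ Set.Icc (0:ℝ) 1,
      ‖p * ((v * (starRingEnd ℂ) (y + (t:ℂ) * v)).re
        * ‖y + (t:ℂ) * v‖ ^ (p - 2)) - F0‖
      ≤ p * (p * R ^ (p - 2)) * ‖v‖ ^ 2 := by
    intro t ht
    set w := y + (t:ℂ) * v with hw
    have key : p * ((v * (starRingEnd ℂ) w).re * ‖w‖ ^ (p - 2)) - F0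
        = p * (v * ((starRingEnd ℂ) w * ((‖w‖ ^ (p - 2) : ℝ) : ℂ)
            - (starRingEnd ℂ) y * ((‖y‖ ^ (p - 2) : ℝ) : ℂ))).re := by
      rw [hF0]
      rw [mul_sub, Complex.sub_re]
      have e1 : ∀ (u : ℂ) (r : ℝ), (v * (u * (r:ℂ))).re = (v * u).re * r := by
        intro u r
        rw [show v * (u * (r:ℂ)) = (r:ℂ) * (v * u) by ring, Complex.re_ofReal_mul]
        ring
      rw [e1, e1]
      ring
    rw [key, Real.norm_eq_abs]
    have h1 : |(v * ((starRingEnd ℂ) w * ((‖w‖ ^ (p - 2) : ℝ) : ℂ)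
        - (starRingEnd ℂ) y * ((‖y‖ ^ (p - 2) : ℝ) : ℂ))).re|
        ≤ ‖v‖ * (p * R ^ (p - 2) * ‖w - y‖) := by
      calc |(v * _).re| ≤ ‖v * _‖ := Complex.abs_re_le_norm _
        _ = ‖v‖ * ‖_‖ := norm_mul _ _
        _ ≤ ‖v‖ * (p * R ^ (p - 2) * ‖w - y‖) := by
            exact mul_le_mul_of_nonneg_left (g_lipschitz hp hy (habsw t ht)) (norm_nonneg v)
    have h2 : ‖w - y‖ ≤ ‖v‖ := by
      rw [hw]
      have : y + (t:ℂ) * v - y = (t:ℂ) * v := by ring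
      rw [this, norm_mul, Complex.norm_real, Real.norm_eq_abs, _root_.abs_of_nonneg ht.1]
      nlinarith [norm_nonneg v, ht.2]
    rw [abs_mul, _root_.abs_of_nonneg (by linarith : (0:ℝ) ≤ p)]
    have hp0 : (0:ℝ) ≤ p := by linarith
    have hRp : (0:ℝ) ≤ p * R ^ (p - 2) := by positivity
    calc p * |(v * _).re| ≤ p * (‖v‖ * (p * R ^ (p - 2) * ‖w - y‖)) :=
          mul_le_mul_of_nonneg_left h1 hp0
      _ ≤ p * (‖v‖ * (p * R ^ (p - 2) * ‖v‖)) := by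
          exact mul_le_mul_of_nonneg_left (mul_le_mul_of_nonneg_left
            (mul_le_mul_of_nonneg_left h2 hRp) (norm_nonneg v)) hp0
      _ = p * (p * R ^ (p - 2)) * ‖v‖ ^ 2 := by ring
  have hmvt := Convex.norm_image_sub_le_of_norm_hasDerivWithin_le
    (f := G) (s := Set.Icc (0:ℝ) 1)
    (fun x hx => (hGderiv x).hasDerivWithinAt)
    hbound (convex_Icc 0 1) (Set.left_mem_Icc.2 zero_le_one) (Set.right_mem_Icc.2 zero_le_one)
  have hG1 : G 1 = ‖z‖ ^ p - F0 := by
    rw [hG]; simp [hv]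
  have hG0 : G 0 = ‖y‖ ^ p := by
    rw [hG]; simp
  rw [hG1, hG0] at hmvt
  rw [Real.norm_eq_abs, Real.norm_eq_abs] at hmvt
  have : |‖z‖ ^ p - F0 - ‖y‖ ^ p|
      ≤ p * (p * R ^ (p - 2)) * ‖v‖ ^ 2 := by
    calc |‖z‖ ^ p - F0 - ‖y‖ ^ p|
        ≤ p * (p * R ^ (p - 2)) * ‖v‖ ^ 2 * |1 - 0| := hmvt
      _ = p * (p * R ^ (p - 2)) * ‖v‖ ^ 2 := by norm_num
  rw [hF0] at this
  convert this using 2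
  ring
lemma re_self_mul {p : ℝ} (hp : 2 ≤ p) (z : ℂ) :
    (z * ((starRingEnd ℂ) z * ((‖z‖ ^ (p - 2) : ℝ) : ℂ))).re
      = ‖z‖ ^ p := by
  have h1 : z * ((starRingEnd ℂ) z * ((‖z‖ ^ (p - 2) : ℝ) : ℂ))
      = ((Complex.normSq z : ℝ) : ℂ) * ((‖z‖ ^ (p - 2) : ℝ) : ℂ) := by
    rw [← Complex.mul_conj]; ring
  rw [h1, ← Complex.ofReal_mul, Complex.ofReal_re, ← Complex.sq_norm]
  rcases eq_or_lt_of_le (norm_nonneg z) with h0 | h0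
  · rw [← h0]
    rw [show ((0:ℝ))^2 = 0 by norm_num, zero_mul,
      Real.zero_rpow (by positivity : p ≠ 0)]
  · rw [← Real.rpow_natCast (‖z‖) 2, ← Real.rpow_add h0]
    norm_num

lemma re_mul_g_sub {p : ℝ} (hp : 2 ≤ p) (y z : ℂ) :
    (z * ((starRingEnd ℂ) z * ((‖z‖ ^ (p - 2) : ℝ) : ℂ)
        - (starRingEnd ℂ) y * ((‖y‖ ^ (p - 2) : ℝ) : ℂ))).re
      = ‖z‖ ^ p - ‖y‖ ^ p
        - ((z - y) * ((starRingEnd ℂ) y * ((‖y‖ ^ (p - 2) : ℝ) : ℂ))).re := by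
  have h1 : z * ((starRingEnd ℂ) z * ((‖z‖ ^ (p - 2) : ℝ) : ℂ)
      - (starRingEnd ℂ) y * ((‖y‖ ^ (p - 2) : ℝ) : ℂ))
      = z * ((starRingEnd ℂ) z * ((‖z‖ ^ (p - 2) : ℝ) : ℂ))
        - z * ((starRingEnd ℂ) y * ((‖y‖ ^ (p - 2) : ℝ) : ℂ)) := by ring
  have h2 : (z - y) * ((starRingEnd ℂ) y * ((‖y‖ ^ (p - 2) : ℝ) : ℂ))
      = z * ((starRingEnd ℂ) y * ((‖y‖ ^ (p - 2) : ℝ) : ℂ))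
        - y * ((starRingEnd ℂ) y * ((‖y‖ ^ (p - 2) : ℝ) : ℂ)) := by ring
  rw [h1, h2, Complex.sub_re, Complex.sub_re, re_self_mul hp, re_self_mul hp]
  ring

theorem riemann_sum_S_convergence
    {X : Type*} [MeasurableSpace X] (μ : Measure X) [IsFiniteMeasure μ]
    (p : ℝ) (hp : 2 ≤ p) (a b : ℝ) (hab : a < b)
    (Y : ℝ → X → ℂ)
    (hYa_meas : Measurable (Y a))
    (hYa_bdd : ∃ M : ℝ, ∀ x : X, ‖Y a x‖ ≤ M)
    (hY_meas : ∀ t ∈ Set.Icc a b, Measurable (Y t))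
    (C θ : ℝ) (hC : 0 ≤ C) (hθ : θ ∈ Set.Ioc (1 / 2 : ℝ) 1)
    (hHolder : ∀ s ∈ Set.Icc a b, ∀ t ∈ Set.Icc a b, ∀ x : X,
      ‖Y t x - Y s x‖ ≤ C * |t - s| ^ θ) :
    ∀ ε > (0 : ℝ), ∃ δ > (0 : ℝ), ∀ (n : ℕ) (t : ℕ → ℝ),
      0 < n → t 0 = a → t n = b →
      (∀ i < n, t i < t (i + 1)) → (∀ i < n, t (i + 1) - t i < δ) →
      |(∑ i ∈ Finset.range n,
          (∫ x, Y (t (i + 1)) x *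
              ((starRingEnd ℂ) (Y (t (i + 1)) x)
                  * ((‖Y (t (i + 1)) x‖ ^ (p - 2) : ℝ) : ℂ)
                - (starRingEnd ℂ) (Y (t i) x)
                  * ((‖Y (t i) x‖ ^ (p - 2) : ℝ) : ℂ)) ∂μ).re)
        - ((p - 1) / p) *
            ((∫ x, ‖Y b x‖ ^ p ∂μ) - ∫ x, ‖Y a x‖ ^ p ∂μ)|
        < ε := by
  obtain ⟨hθ1, hθ2⟩ := hθ
  obtain ⟨M, hM⟩ := hYa_bdd
  have hp0 : (0:ℝ) < p := by linarith
  set R : ℝ := max M 0 + C * (b - a) ^ θ with hRdef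
  have hba : (0:ℝ) < b - a := by linarith
  have hR0 : (0:ℝ) ≤ R := add_nonneg (le_max_right _ _)
    (mul_nonneg hC (Real.rpow_nonneg hba.le θ))
  have hbd : ∀ u ∈ Set.Icc a b, ∀ x, ‖Y u x‖ ≤ R := by
    intro u hu x
    have h1 : ‖Y u x‖ ≤ ‖Y a x‖ + ‖Y u x - Y a x‖ := by
      calc ‖Y u x‖ = ‖Y a x + (Y u x - Y a x)‖ := by ring_nf
        _ ≤ _ := norm_add_le _ _
    have h2 := hHolder a ⟨le_refl a, hab.le⟩ u hu x
    have h3 : |u - a| ^ θ ≤ (b - a) ^ θ := by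
      apply Real.rpow_le_rpow (abs_nonneg _) ?_ (by linarith)
      rw [_root_.abs_of_nonneg (by linarith [hu.1] : (0:ℝ) ≤ u - a)]
      linarith [hu.2]
    have h4 : C * |u - a| ^ θ ≤ C * (b - a) ^ θ := mul_le_mul_of_nonneg_left h3 hC
    have h5 : M ≤ max M 0 := le_max_left _ _
    have := hM x
    rw [hRdef]
    linarith
  set K : ℝ := p * (p * R ^ (p - 2)) with hKdef
  have hK0 : (0:ℝ) ≤ K := by
    rw [hKdef]
    exact mul_nonneg hp0.le (mul_nonneg hp0.le (Real.rpow_nonneg hR0 _))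
  have hμ0 : (0:ℝ) ≤ (μ Set.univ).toReal := ENNReal.toReal_nonneg
  intro ε hε
  set B : ℝ := K * C ^ 2 * (μ Set.univ).toReal * (b - a) / p + 1 with hBdef
  have hB1 : (1:ℝ) ≤ B := by
    rw [hBdef]
    have : (0:ℝ) ≤ K * C ^ 2 * (μ Set.univ).toReal * (b - a) / p :=
      div_nonneg (mul_nonneg (mul_nonneg (mul_nonneg hK0 (sq_nonneg C)) hμ0) hba.le) hp0.le
    linarith
  have hB0 : (0:ℝ) < B := by linarith
  have hexp : (0:ℝ) < 2 * θ - 1 := by linarith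
  have hεB : (0:ℝ) < ε / B := div_pos hε hB0
  refine ⟨(ε / B) ^ (1 / (2 * θ - 1)), Real.rpow_pos_of_pos hεB _, ?_⟩
  set δ : ℝ := (ε / B) ^ (1 / (2 * θ - 1)) with hδdef
  have hδ0 : (0:ℝ) < δ := Real.rpow_pos_of_pos hεB _
  have hδpow : δ ^ (2 * θ - 1) = ε / B := by
    rw [hδdef, ← Real.rpow_mul hεB.le, one_div, inv_mul_cancel₀ hexp.ne', Real.rpow_one]
  intro n t hn ht0 htn hlt hmesh
  -- monotonicity / membership
  have hmono : ∀ j, j ≤ n → ∀ i, i ≤ j → t i ≤ t j := by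
    intro j
    induction j with
    | zero => intro _ i hi; interval_cases i; exact le_refl _
    | succ j ih =>
      intro hj i hi
      rcases Nat.eq_or_lt_of_le hi with rfl | h
      · exact le_refl _
      · exact (ih (by omega) i (by omega)).trans (hlt j (by omega)).le
  have hmem : ∀ i, i ≤ n → t i ∈ Set.Icc a b := by
    intro i hi
    constructor
    · rw [← ht0]; exact hmono i hi 0 (Nat.zero_le _)
    · rw [← htn]; exact hmono n le_rfl i hi
  have hmeas : ∀ i ≤ n, Measurable (Y (t i)) := fun i hi => hY_meas _ (hmem i hi)
  -- notation
  set g : ℕ → X → ℂ := fun i x => (starRingEnd ℂ) (Y (t i) x)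
    * ((‖Y (t i) x‖ ^ (p - 2) : ℝ) : ℂ) with hgdef
  set P : ℕ → ℝ := fun i => ∫ x, ‖Y (t i) x‖ ^ p ∂μ with hPdef
  set H : ℕ → ℝ := fun i => ∫ x, ((Y (t (i + 1)) x - Y (t i) x) * g i x).re ∂μ with hHdef
  have hg_meas : ∀ i ≤ n, Measurable (g i) := by
    intro i hi
    exact (Complex.continuous_conj.measurable.comp (hmeas i hi)).mul
      ((Complex.continuous_ofReal.measurable).comp
        ((Real.continuous_rpow_const (by linarith : (0:ℝ) ≤ p - 2)).measurable.comp
          (continuous_norm.measurable.comp (hmeas i hi))))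
  have hg_bd : ∀ i ≤ n, ∀ x, ‖g i x‖ ≤ R * R ^ (p - 2) := by
    intro i hi x
    rw [hgdef]
    simp only [norm_mul, Complex.norm_conj, Complex.norm_real, Real.norm_eq_abs]
    rw [_root_.abs_of_nonneg (Real.rpow_nonneg (norm_nonneg _) _)]
    have h1 := hbd _ (hmem i hi) x
    exact mul_le_mul h1 (Real.rpow_le_rpow (norm_nonneg _) h1 (by linarith))
      (Real.rpow_nonneg (norm_nonneg _) _) hR0
  -- integrability
  have hfp_int : ∀ i ≤ n, Integrable (fun x => ‖Y (t i) x‖ ^ p) μ := by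
    intro i hi
    refine Integrable.mono' (integrable_const (R ^ p))
      ((Real.continuous_rpow_const (by linarith : (0:ℝ) ≤ p)).measurable.comp
        (continuous_norm.measurable.comp (hmeas i hi))).aestronglyMeasurable
      (ae_of_all _ fun x => ?_)
    rw [Real.norm_eq_abs, _root_.abs_of_nonneg (Real.rpow_nonneg (norm_nonneg _) _)]
    exact Real.rpow_le_rpow (norm_nonneg _) (hbd _ (hmem i hi) x) (by linarith)
  have hcplx_int : ∀ i < n, Integrable (fun x => Y (t (i + 1)) x
      * (g (i + 1) x - g i x)) μ := by
    intro i hi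
    refine Integrable.mono' (integrable_const (R * (R * R ^ (p - 2) + R * R ^ (p - 2))))
      (((hmeas (i+1) (by omega)).mul ((hg_meas (i+1) (by omega)).sub
        (hg_meas i (by omega)))).aestronglyMeasurable)
      (ae_of_all _ fun x => ?_)
    rw [norm_mul]
    refine mul_le_mul (hbd _ (hmem (i+1) (by omega)) x) ?_ (norm_nonneg _) hR0
    calc ‖g (i+1) x - g i x‖
        ≤ ‖g (i+1) x‖ + ‖g i x‖ := norm_sub_le _ _
      _ ≤ R * R ^ (p - 2) + R * R ^ (p - 2) :=
          add_le_add (hg_bd (i+1) (by omega) x) (hg_bd i (by omega) x)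
  have hh_int : ∀ i < n, Integrable
      (fun x => ((Y (t (i + 1)) x - Y (t i) x) * g i x).re) μ := by
    intro i hi
    refine Integrable.mono' (integrable_const ((R + R) * (R * R ^ (p - 2))))
      ((Complex.measurable_re.comp (((hmeas (i+1) (by omega)).sub (hmeas i (by omega))).mul
        (hg_meas i (by omega)))).aestronglyMeasurable)
      (ae_of_all _ fun x => ?_)
    rw [Real.norm_eq_abs]
    calc |((Y (t (i + 1)) x - Y (t i) x) * g i x).re|
        ≤ ‖(Y (t (i + 1)) x - Y (t i) x) * g i x‖ := Complex.abs_re_le_norm _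
      _ = ‖Y (t (i + 1)) x - Y (t i) x‖ * ‖g i x‖ := norm_mul _ _
      _ ≤ (R + R) * (R * R ^ (p - 2)) := by
          refine mul_le_mul ?_ (hg_bd i (by omega) x) (norm_nonneg _) (by linarith)
          calc ‖Y (t (i + 1)) x - Y (t i) x‖
              ≤ ‖Y (t (i + 1)) x‖ + ‖Y (t i) x‖ := by
                exact (norm_sub_le _ _)
            _ ≤ R + R := add_le_add (hbd _ (hmem (i+1) (by omega)) x) (hbd _ (hmem i (by omega)) x)
  -- Step A : value of each term
  have hstepA : ∀ i < n, (∫ x, Y (t (i + 1)) x * (g (i + 1) x - g i x) ∂μ).re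
      = (P (i + 1) - P i) - H i := by
    intro i hi
    have hre := integral_re (hcplx_int i hi)
    simp only [RCLike.re_to_complex] at hre
    rw [← hre]
    have hcongr : (fun x => (Y (t (i + 1)) x * (g (i + 1) x - g i x)).re)
        = fun x => ‖Y (t (i + 1)) x‖ ^ p - ‖Y (t i) x‖ ^ p
          - ((Y (t (i + 1)) x - Y (t i) x) * g i x).re := by
      funext x
      exact re_mul_g_sub hp (Y (t i) x) (Y (t (i + 1)) x)
    rw [hcongr]
    have hsub_int : Integrable (fun x => ‖Y (t (i+1)) x‖ ^ p
        - ‖Y (t i) x‖ ^ p) μ := (hfp_int (i+1) (by omega)).sub (hfp_int i (by omega))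
    rw [integral_sub hsub_int (hh_int i hi)]
    rw [integral_sub (hfp_int (i+1) (by omega)) (hfp_int i (by omega))]
  -- Step B : error bound
  set Q : ℕ → ℝ := fun i => (P (i + 1) - P i) - p * H i with hQdef
  have hQbd : ∀ i < n, |Q i| ≤ K * C ^ 2 * ((t (i+1) - t i) ^ (2 * θ))
      * (μ Set.univ).toReal := by
    intro i hi
    have hΔ0 : (0:ℝ) < t (i + 1) - t i := by linarith [hlt i hi]
    have hQint : Q i = ∫ x, (‖Y (t (i + 1)) x‖ ^ p
        - ‖Y (t i) x‖ ^ p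
        - p * ((Y (t (i + 1)) x - Y (t i) x) * g i x).re) ∂μ := by
      rw [hQdef]
      have hsub_int : Integrable (fun x => ‖Y (t (i+1)) x‖ ^ p
          - ‖Y (t i) x‖ ^ p) μ := (hfp_int (i+1) (by omega)).sub (hfp_int i (by omega))
      have hmul_int : Integrable (fun x => p * ((Y (t (i + 1)) x - Y (t i) x) * g i x).re) μ :=
        (hh_int i hi).const_mul p
      rw [integral_sub hsub_int hmul_int]
      rw [integral_sub (hfp_int (i+1) (by omega)) (hfp_int i (by omega))]
      rw [MeasureTheory.integral_const_mul]
    rw [hQint]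
    rw [← Real.norm_eq_abs]
    refine norm_integral_le_of_norm_le_const (ae_of_all _ fun x => ?_)
    rw [Real.norm_eq_abs]
    have htay := taylor_bound hp hR0 (hbd _ (hmem i (by omega)) x)
      (hbd _ (hmem (i+1) (by omega)) x)
    have hhold := hHolder (t i) (hmem i (by omega)) (t (i+1)) (hmem (i+1) (by omega)) x
    rw [_root_.abs_of_nonneg hΔ0.le] at hhold
    have hsq : ‖Y (t (i + 1)) x - Y (t i) x‖ ^ 2
        ≤ (C * (t (i + 1) - t i) ^ θ) ^ 2 :=
      pow_le_pow_left₀ (norm_nonneg _) hhold 2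
    have hrw : (C * (t (i + 1) - t i) ^ θ) ^ 2 = C ^ 2 * (t (i + 1) - t i) ^ (2 * θ) := by
      rw [mul_pow, ← Real.rpow_natCast ((t (i + 1) - t i) ^ θ) 2,
        ← Real.rpow_mul hΔ0.le]
      norm_num [mul_comm]
    calc |‖Y (t (i + 1)) x‖ ^ p - ‖Y (t i) x‖ ^ p
          - p * ((Y (t (i + 1)) x - Y (t i) x) * g i x).re|
        ≤ K * ‖Y (t (i + 1)) x - Y (t i) x‖ ^ 2 := htay
      _ ≤ K * (C ^ 2 * (t (i + 1) - t i) ^ (2 * θ)) := by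
          rw [← hrw]; exact mul_le_mul_of_nonneg_left hsq hK0
      _ = K * C ^ 2 * (t (i + 1) - t i) ^ (2 * θ) := by ring
  -- rewrite the sum
  have hsum_eq : (∑ i ∈ Finset.range n,
        (∫ x, Y (t (i + 1)) x * (g (i + 1) x - g i x) ∂μ).re)
      = (p - 1) / p * (P n - P 0) + (1 / p) * ∑ i ∈ Finset.range n, Q i := by
    have h1 : ∀ i ∈ Finset.range n,
        (∫ x, Y (t (i + 1)) x * (g (i + 1) x - g i x) ∂μ).re
        = (p - 1) / p * (P (i + 1) - P i) + (1 / p) * Q i := by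
      intro i hi
      rw [hstepA i (Finset.mem_range.mp hi), hQdef]
      field_simp
      ring
    rw [Finset.sum_congr rfl h1, Finset.sum_add_distrib, ← Finset.mul_sum, ← Finset.mul_sum,
      Finset.sum_range_sub (fun i => P i)]
  -- identify P n and P 0
  have hPn : P n = ∫ x, ‖Y b x‖ ^ p ∂μ := by rw [hPdef]; simp only [htn]
  have hP0 : P 0 = ∫ x, ‖Y a x‖ ^ p ∂μ := by rw [hPdef]; simp only [ht0]
  rw [show (∑ i ∈ Finset.range n,
          (∫ x, Y (t (i + 1)) x *
              ((starRingEnd ℂ) (Y (t (i + 1)) x)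
                  * ((‖Y (t (i + 1)) x‖ ^ (p - 2) : ℝ) : ℂ)
                - (starRingEnd ℂ) (Y (t i) x)
                  * ((‖Y (t i) x‖ ^ (p - 2) : ℝ) : ℂ)) ∂μ).re)
      = ∑ i ∈ Finset.range n, (∫ x, Y (t (i + 1)) x * (g (i + 1) x - g i x) ∂μ).re from rfl]
  rw [hsum_eq, ← hPn, ← hP0]
  have hcancel : (p - 1) / p * (P n - P 0) + 1 / p * ∑ i ∈ Finset.range n, Q i
      - (p - 1) / p * (P n - P 0) = 1 / p * ∑ i ∈ Finset.range n, Q i := by ring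
  rw [hcancel]
  -- final numeric bound
  have hsumQ : |∑ i ∈ Finset.range n, Q i|
      ≤ K * C ^ 2 * (μ Set.univ).toReal * (δ ^ (2 * θ - 1) * (b - a)) := by
    calc |∑ i ∈ Finset.range n, Q i| ≤ ∑ i ∈ Finset.range n, |Q i| :=
        Finset.abs_sum_le_sum_abs _ _
      _ ≤ ∑ i ∈ Finset.range n, K * C ^ 2 * (μ Set.univ).toReal
          * (δ ^ (2 * θ - 1) * (t (i + 1) - t i)) := by
        refine Finset.sum_le_sum fun i hi => ?_
        have hi' := Finset.mem_range.mp hi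
        have hΔ0 : (0:ℝ) < t (i + 1) - t i := by linarith [hlt i hi']
        refine (hQbd i hi').trans ?_
        have hΔpow : (t (i + 1) - t i) ^ (2 * θ)
            ≤ δ ^ (2 * θ - 1) * (t (i + 1) - t i) := by
          have he : (t (i + 1) - t i) ^ (2 * θ)
              = (t (i + 1) - t i) ^ (2 * θ - 1) * (t (i + 1) - t i) := by
            rw [show (2 * θ) = (2 * θ - 1) + 1 by ring, Real.rpow_add hΔ0, Real.rpow_one]
            ring_nf
          rw [he]
          refine mul_le_mul_of_nonneg_right ?_ hΔ0.le
          exact Real.rpow_le_rpow hΔ0.le (by linarith [hmesh i hi']) hexp.le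
        calc K * C ^ 2 * (t (i + 1) - t i) ^ (2 * θ) * (μ Set.univ).toReal
            ≤ K * C ^ 2 * (δ ^ (2 * θ - 1) * (t (i + 1) - t i)) * (μ Set.univ).toReal := by
              exact mul_le_mul_of_nonneg_right
                (mul_le_mul_of_nonneg_left hΔpow (mul_nonneg hK0 (sq_nonneg C))) hμ0
          _ = K * C ^ 2 * (μ Set.univ).toReal * (δ ^ (2 * θ - 1) * (t (i + 1) - t i)) := by
              ring
      _ = K * C ^ 2 * (μ Set.univ).toReal * (δ ^ (2 * θ - 1) * (b - a)) := by
        rw [← Finset.mul_sum, ← Finset.mul_sum, Finset.sum_range_sub (fun i => t i), ht0, htn]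
  rw [abs_mul, _root_.abs_of_nonneg (one_div_nonneg.mpr hp0.le)]
  calc 1 / p * |∑ i ∈ Finset.range n, Q i|
      ≤ 1 / p * (K * C ^ 2 * (μ Set.univ).toReal * (δ ^ (2 * θ - 1) * (b - a))) :=
        mul_le_mul_of_nonneg_left hsumQ (one_div_nonneg.mpr hp0.le)
    _ = (B - 1) * (ε / B) := by
        rw [hδpow, hBdef]
        field_simp
        ring
    _ < ε := by
        have h1 : (B - 1) * (ε / B) < B * (ε / B) := by
          apply mul_lt_mul_of_pos_right _ hεB
          linarith
        have h2 : B * (ε / B) = ε := by field_simp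
        linarith
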